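/- Fix c ≥ 1. For all states a, b of length c (nondecreasing tuples of nonnegative reals) and every w ≥ 0 with b_1 ≤ w ≤ a_1: H(a, ins(b,w)) − H(a,b) = b_1 − w. (Case 4 of the proof of the free-disposal hedging lemma: the new reward displaces the smallest entry of the second list but is disposed by the first list; here the change in the hedging term is exactly b_1 − w.) -/

import Mathlib

/-- Free-disposal insertion: given a state `l` (a nondecreasing list of length `c`
of nonnegative reals) and a new reward `w ≥ 0`, `ins l w` is `l` itself if
`w ≤ l₁` (the smallest entry), and otherwise the nondecreasing rearrangement of
`(l₂, …, l_c, w)` (the smallest entry is disposed). -/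
noncomputable def ins (l : List ℝ) (w : ℝ) : List ℝ :=
  if w ≤ l.headI then l else l.tail.orderedInsert (· ≤ ·) w

/-- The hedging term for a single offline item of capacity `c`:
`H(a, b) = ( max_{1 ≤ i ≤ c} Σ_{j=1}^{i} (a_j − b_j) )⁺`. -/
noncomputable def hedge (c : ℕ) (a b : List ℝ) : ℝ :=
  max (sSup ((fun i => ∑ j ∈ Finset.range i, (a.getD j 0 - b.getD j 0)) ''
    Set.Icc 1 c)) 0

/-! ### Auxiliary definitions and lemmas -/

noncomputable def Fsum (a b : List ℝ) (i : ℕ) : ℝ :=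
  ∑ j ∈ Finset.range i, (a.getD j 0 - b.getD j 0)

lemma hedge_eq (c : ℕ) (a b : List ℝ) :
    hedge c a b = max (sSup (Fsum a b '' Set.Icc 1 c)) 0 := rfl

lemma sum_getD_eq_take (l : List ℝ) (i : ℕ) :
    ∑ j ∈ Finset.range i, l.getD j 0 = (l.take i).sum := by
  induction l generalizing i with
  | nil => simp
  | cons x xs ih =>
    cases i with
    | zero => simp
    | succ n =>
      rw [Finset.sum_range_succ']
      simp only [List.getD_cons_succ, List.getD_cons_zero, List.take_succ_cons,
        List.sum_cons, ih]
      ring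

lemma Fsum_eq_take (a b : List ℝ) (i : ℕ) :
    Fsum a b i = (a.take i).sum - (b.take i).sum := by
  rw [Fsum, Finset.sum_sub_distrib, sum_getD_eq_take, sum_getD_eq_take]

/-- **Case 4 of the free-disposal hedging lemma.**
When the new reward `w` displaces the smallest entry of the second list but is
disposed by the first list (`b₁ ≤ w ≤ a₁`), the change in the hedging term is exactly
`b₁ − w`: `H(a, ins(b,w)) − H(a,b) = b₁ − w`. -/
theorem hedging_case4 (c : ℕ) (hc : 1 ≤ c) (a b : List ℝ)
    (ha_len : a.length = c) (hb_len : b.length = c)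
    (ha_sorted : a.Pairwise (· ≤ ·)) (hb_sorted : b.Pairwise (· ≤ ·))
    (ha_nonneg : ∀ x ∈ a, (0 : ℝ) ≤ x) (hb_nonneg : ∀ x ∈ b, (0 : ℝ) ≤ x)
    (w : ℝ) (hw : 0 ≤ w) (hwb : b.headI ≤ w) (hwa : w ≤ a.headI) :
    hedge c a (ins b w) - hedge c a b = b.headI - w := by
  by_cases hcase : w ≤ b.headI
  · have hw' : b.headI = w := le_antisymm hwb hcase
    simp only [ins]
    rw [if_pos hcase, sub_self, hw', sub_self]
  -- main case: w > b.headI, the insertion really happens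
  obtain ⟨a0, s, rfl⟩ : ∃ a0 s, a = a0 :: s := by
    cases a with
    | nil => simp at ha_len; omega
    | cons x xs => exact ⟨x, xs, rfl⟩
  obtain ⟨b0, t, rfl⟩ : ∃ b0 t, b = b0 :: t := by
    cases b with
    | nil => simp at hb_len; omega
    | cons x xs => exact ⟨x, xs, rfl⟩
  simp only [List.headI] at hwa hwb hcase ⊢
  set k : ℕ := (t.takeWhile (fun x => decide ¬ (w ≤ x))).length with hkdef
  have htake : t.take k = t.takeWhile (fun x => decide ¬ (w ≤ x)) :=
    (List.prefix_iff_eq_take.mp (List.takeWhile_prefix _)).symm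
  have hk_le : k ≤ t.length := by
    rw [hkdef]
    exact (List.takeWhile_prefix _).length_le
  have hdrop : t.drop k = t.dropWhile (fun x => decide ¬ (w ≤ x)) := by
    have h1 : t.take k ++ t.drop k = t := List.take_append_drop k t
    have h2 : t.takeWhile (fun x => decide ¬ (w ≤ x)) ++
        t.dropWhile (fun x => decide ¬ (w ≤ x)) = t :=
      List.takeWhile_append_dropWhile
    rw [htake] at h1
    exact List.append_cancel_left (h1.trans h2.symm)
  have hins : ins (b0 :: t) w = t.take k ++ w :: t.drop k := by
    simp only [ins, List.headI_cons, List.tail_cons]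
    simp only [hcase, ↓reduceIte]
    rw [List.orderedInsert_eq_take_drop, htake, hdrop]
  have ht_len : t.length = c - 1 := by
    simp at hb_len; omega
  have hs_len : s.length = c - 1 := by
    simp at ha_len; omega
  have hk1c : k + 1 ≤ c := by omega
  -- elements of takeWhile are < w
  have h_lt_w : ∀ j, j < k → t.getD j 0 < w := by
    intro j hj
    have hjt : j < t.length := lt_of_lt_of_le hj hk_le
    have hjk : j < (t.take k).length := by
      rw [List.length_take]; omega
    have hmem : (t.take k)[j] ∈ t.takeWhile (fun x => decide ¬ (w ≤ x)) := by
      rw [← htake]; exact List.getElem_mem hjk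
    have hp := List.mem_takeWhile_imp hmem
    simp only [List.getElem_take, decide_not, Bool.not_eq_true', decide_eq_false_iff_not,
      not_le, decide_eq_true_eq] at hp
    rwa [List.getD_eq_getElem t 0 hjt]
  -- b-entries with index ≤ k are at most w
  have hbw : ∀ j, j ≤ k → (b0 :: t).getD j 0 ≤ w := by
    intro j hj
    cases j with
    | zero => simpa using le_of_not_ge hcase
    | succ m =>
      have : t.getD m 0 < w := h_lt_w m (by omega)
      simpa using this.le
  -- a-entries are at least w
  have haw : ∀ j, j < c → w ≤ (a0 :: s).getD j 0 := by
    intro j hj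
    cases j with
    | zero => simpa using hwa
    | succ m =>
      have hm : m < s.length := by omega
      have hmem : s.getD m 0 ∈ s := by
        rw [List.getD_eq_getElem s 0 hm]; exact List.getElem_mem hm
      have := (List.pairwise_cons.mp ha_sorted).1 _ hmem
      simp only [List.getD_cons_succ]
      linarith
  -- prefix sums of the new list
  set B' : List ℝ := t.take k ++ w :: t.drop k with hB'def
  have hQ1 : ∀ i, i ≤ k → (B'.take i).sum = (t.take i).sum := by
    intro i hi
    rw [hB'def, List.take_append, List.take_take,
      min_eq_left hi]
    have : i - (t.take k).length = 0 := by
      rw [List.length_take]; omega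
    rw [this]
    simp
  have hP : ∀ i, ((b0 :: t).take (i + 1)).sum = b0 + (t.take i).sum := by
    intro i; simp
  have hQ2 : ∀ i, k < i → (B'.take i).sum = ((b0 :: t).take i).sum - b0 + w := by
    intro i hi
    obtain ⟨m, rfl⟩ : ∃ m, i = k + 1 + m := ⟨i - k - 1, by omega⟩
    have hlen : (t.take k).length = k := by rw [List.length_take]; omega
    have e1 : k + 1 + m - (t.take k).length = m + 1 := by omega
    have h1 : B'.take (k + 1 + m) = t.take k ++ w :: (t.drop k).take m := by
      rw [hB'def, List.take_append, List.take_take,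
        min_eq_right (by omega : k ≤ k + 1 + m), e1, List.take_succ_cons]
    have h2 : (b0 :: t).take (k + 1 + m) = b0 :: (t.take k ++ (t.drop k).take m) := by
      have e2 : k + 1 + m = (k + m) + 1 := by omega
      rw [e2, List.take_succ_cons, ← List.take_add]
    rw [h1, h2]
    simp only [List.sum_append, List.sum_cons]
    ring
  -- key identities for the partial-sum differences
  have key1 : ∀ i, k < i → Fsum (a0 :: s) B' i = Fsum (a0 :: s) (b0 :: t) i + (b0 - w) := by
    intro i hi
    rw [Fsum_eq_take, Fsum_eq_take, hQ2 i hi]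
    ring
  have key2 : ∀ i, 1 ≤ i → i ≤ k →
      Fsum (a0 :: s) B' i = Fsum (a0 :: s) (b0 :: t) (i + 1) - (a0 :: s).getD i 0 + b0 := by
    intro i h1 h2
    have hA : ((a0 :: s).take (i + 1)).sum = ((a0 :: s).take i).sum + (a0 :: s).getD i 0 := by
      rw [← sum_getD_eq_take, ← sum_getD_eq_take, Finset.sum_range_succ]
    rw [Fsum_eq_take, Fsum_eq_take, hQ1 i h2, hA, hP i]
    ring
  -- monotonicity of F on [0, k+1]
  have hFmono : ∀ i j, i ≤ j → j ≤ k + 1 →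
      Fsum (a0 :: s) (b0 :: t) i ≤ Fsum (a0 :: s) (b0 :: t) j := by
    intro i j hij hjk
    have hsplit : Fsum (a0 :: s) (b0 :: t) j =
        Fsum (a0 :: s) (b0 :: t) i +
          ∑ m ∈ Finset.Ico i j, ((a0 :: s).getD m 0 - (b0 :: t).getD m 0) := by
      rw [Fsum, Fsum, Finset.range_eq_Ico,
        ← Finset.sum_Ico_consecutive _ (Nat.zero_le i) hij, ← Finset.range_eq_Ico]
    rw [hsplit]
    have : 0 ≤ ∑ m ∈ Finset.Ico i j, ((a0 :: s).getD m 0 - (b0 :: t).getD m 0) := by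
      apply Finset.sum_nonneg
      intro m hm
      rw [Finset.mem_Ico] at hm
      have hmk : m ≤ k := by omega
      have hmc : m < c := by omega
      have := hbw m hmk
      have := haw m hmc
      linarith
    linarith
  -- the suprema
  have hfin : ∀ (f : ℕ → ℝ), BddAbove (f '' Set.Icc 1 c) := fun f =>
    ((Set.finite_Icc 1 c).image f).bddAbove
  have h1mem : (1 : ℕ) ∈ Set.Icc 1 c := by simp [hc]
  have hk1mem : k + 1 ∈ Set.Icc 1 c := by simp [hk1c]
  have hneF : (Fsum (a0 :: s) (b0 :: t) '' Set.Icc 1 c).Nonempty :=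
    ⟨_, 1, h1mem, rfl⟩
  have hneG : (Fsum (a0 :: s) B' '' Set.Icc 1 c).Nonempty :=
    ⟨_, 1, h1mem, rfl⟩
  set supF := sSup (Fsum (a0 :: s) (b0 :: t) '' Set.Icc 1 c) with hsupFdef
  set supG := sSup (Fsum (a0 :: s) B' '' Set.Icc 1 c) with hsupGdef
  have hF1 : Fsum (a0 :: s) (b0 :: t) 1 = a0 - b0 := by
    simp [Fsum]
  have hF1le : Fsum (a0 :: s) (b0 :: t) 1 ≤ supF :=
    le_csSup (hfin _) ⟨1, h1mem, rfl⟩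
  have hsupF0 : 0 ≤ supF := by
    have : (0:ℝ) ≤ a0 - b0 := by linarith
    linarith [hF1 ▸ hF1le]
  have hGk1 : Fsum (a0 :: s) B' (k + 1) =
      Fsum (a0 :: s) (b0 :: t) (k + 1) + (b0 - w) := key1 (k + 1) (by omega)
  have hGk1le : Fsum (a0 :: s) B' (k + 1) ≤ supG :=
    le_csSup (hfin _) ⟨k + 1, hk1mem, rfl⟩
  have hsupG0 : 0 ≤ supG := by
    have h1 : Fsum (a0 :: s) (b0 :: t) 1 ≤ Fsum (a0 :: s) (b0 :: t) (k + 1) :=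
      hFmono 1 (k + 1) (by omega) le_rfl
    have : (0:ℝ) ≤ Fsum (a0 :: s) B' (k + 1) := by
      rw [hGk1]
      rw [hF1] at h1
      linarith
    linarith
  have hGle : supG ≤ supF + (b0 - w) := by
    apply csSup_le hneG
    rintro x ⟨i, ⟨hi1, hic⟩, rfl⟩
    by_cases hik : k < i
    · rw [key1 i hik]
      have : Fsum (a0 :: s) (b0 :: t) i ≤ supF :=
        le_csSup (hfin _) ⟨i, ⟨hi1, hic⟩, rfl⟩
      linarith
    · push_neg at hik
      rw [key2 i hi1 hik]
      have hmem : i + 1 ∈ Set.Icc 1 c := by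
        simp only [Set.mem_Icc]; omega
      have h1 : Fsum (a0 :: s) (b0 :: t) (i + 1) ≤ supF :=
        le_csSup (hfin _) ⟨i + 1, hmem, rfl⟩
      have h2 : w ≤ (a0 :: s).getD i 0 := haw i (by omega)
      linarith
  have hGge : supF + (b0 - w) ≤ supG := by
    have : supF ≤ supG - (b0 - w) := by
      apply csSup_le hneF
      rintro x ⟨i, ⟨hi1, hic⟩, rfl⟩
      by_cases hik : k < i
      · have h1 : Fsum (a0 :: s) B' i ≤ supG :=
          le_csSup (hfin _) ⟨i, ⟨hi1, hic⟩, rfl⟩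
        have := key1 i hik
        linarith
      · push_neg at hik
        have h1 : Fsum (a0 :: s) (b0 :: t) i ≤ Fsum (a0 :: s) (b0 :: t) (k + 1) :=
          hFmono i (k + 1) (by omega) le_rfl
        linarith [hGk1le, hGk1]
    linarith
  rw [hedge_eq, hedge_eq, hins, ← hsupFdef, ← hsupGdef,
    max_eq_left hsupG0, max_eq_left hsupF0]
  linarith
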